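/- Let (f,p) : (F,A)_G → (H,B)_K be a soft group homomorphism such that F(x) = ker f for some x ∈ A. If (f,p) is monic in the category of soft groups, then both f : G → K and p : A → B are injective. -/
import Mathlib


universe u v

/-- Let `(f,p) : (F,A)_G → (H,B)_K` be a soft group homomorphism such that
`F(x) = ker f` for some `x ∈ A`. If `(f,p)` is monic in the category of soft groups,
then both `f` and `p` are injective. -/
theorem soft_group_monic_implies_injective
    {G : Type u} {K : Type*} [Group G] [Group K] {A : Type v} {B : Type*}
    (F : A → Subgroup G) (H : B → Subgroup K)
    (f : G →* K) (p : A → B)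
    (hfp : ∀ a : A, (F a).map f = H (p a))
    (hker : ∃ x : A, F x = f.ker)
    (hmonic : ∀ (M : Type u) (_ : Group M) (C : Type v) (L : C → Subgroup M)
        (f₁ f₂ : M →* G) (p₁ p₂ : C → A),
        (∀ c : C, (L c).map f₁ = F (p₁ c)) →
        (∀ c : C, (L c).map f₂ = F (p₂ c)) →
        f.comp f₁ = f.comp f₂ → p ∘ p₁ = p ∘ p₂ →
        f₁ = f₂ ∧ p₁ = p₂) :
    Function.Injective f ∧ Function.Injective p := by
  have hf : Function.Injective f := by
    have h := hmonic f.ker inferInstance PEmpty (fun c => c.elim) f.ker.subtype 1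
      (fun c => c.elim) (fun c => c.elim) (fun c => c.elim) (fun c => c.elim)
      (by ext ⟨g, hg⟩; simpa using hg) (funext fun c => c.elim)
    rw [injective_iff_map_eq_one]
    intro g hg
    have : f.ker.subtype ⟨g, hg⟩ = (1 : f.ker →* G) ⟨g, hg⟩ := by rw [h.1]
    simpa using this
  refine ⟨hf, fun a b hab => ?_⟩
  have hFab : F a = F b := Subgroup.map_injective hf (by rw [hfp a, hfp b, hab])
  have h := hmonic G inferInstance PUnit (fun _ => F a) (MonoidHom.id G) (MonoidHom.id G)
    (fun _ => a) (fun _ => b) (fun _ => by simp) (fun _ => by simp [hFab]) rfl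
    (funext fun _ => hab)
  exact congrFun h.2 PUnit.unit
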